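/- Let λ : (0,∞) → ℝ be continuous with λ(ρ) ≤ α < -1 for ρ ∈ (0,r] and with 1/(ρ(λ(ρ)+1)) = O(ρ^{2k-1}) as ρ → 0 for some integer k ≥ 1. Fix T > 0, c > 0 and 0 < r. Let R : [0,T') → (0,∞) be the maximal solution of R'(t) = (c/(2(T-t)))·(λ(R(t)) + 1)·R(t), R(0) = r. Then T' < T, R(t) → 0 as t → T', and there is a constant C > 0 with R(t)^{-2k} ≤ C/(T'-t) for t close to T'. -/

import Mathlib

open Filter Asymptotics

open Set intervalIntegral in
private noncomputable def fn9 (lam : ℝ → ℝ) (s : ℝ) : ℝ := 1 / (s * (lam s + 1))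

private noncomputable def H9 (lam : ℝ → ℝ) (r ρ : ℝ) : ℝ := ∫ s in ρ..r, fn9 lam s

private noncomputable def phi9 (T c t : ℝ) : ℝ := c / 2 * (Real.log (T - t) - Real.log T)

section Aux

open Set intervalIntegral

variable (lam : ℝ → ℝ) {α r : ℝ}

private lemma lam9_neg (hα : α < -1) (hbound : ∀ ρ, 0 < ρ → ρ ≤ r → lam ρ ≤ α)
    {s : ℝ} (hs : s ∈ Set.Ioc 0 r) : lam s + 1 < 0 := by
  have := hbound s hs.1 hs.2; linarith

private lemma fn9_neg (hα : α < -1) (hbound : ∀ ρ, 0 < ρ → ρ ≤ r → lam ρ ≤ α)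
    {s : ℝ} (hs : s ∈ Set.Ioc 0 r) : fn9 lam s < 0 := by
  have h1 := lam9_neg lam hα hbound hs
  have : s * (lam s + 1) < 0 := mul_neg_of_pos_of_neg hs.1 h1
  exact div_neg_of_pos_of_neg one_pos this

private lemma fn9_contAt (hcont : ContinuousOn lam (Set.Ioi 0))
    (hα : α < -1) (hbound : ∀ ρ, 0 < ρ → ρ ≤ r → lam ρ ≤ α)
    {s : ℝ} (hs : s ∈ Set.Ioc 0 r) : ContinuousAt (fn9 lam) s := by
  have h1 : ContinuousAt lam s := hcont.continuousAt (Ioi_mem_nhds hs.1)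
  have h2 : s * (lam s + 1) ≠ 0 :=
    mul_ne_zero (ne_of_gt hs.1) (ne_of_lt (lam9_neg lam hα hbound hs))
  exact continuousAt_const.div ((continuousAt_id.mul (h1.add continuousAt_const))) h2

private lemma fn9_integrable (hcont : ContinuousOn lam (Set.Ioi 0))
    (hα : α < -1) (hbound : ∀ ρ, 0 < ρ → ρ ≤ r → lam ρ ≤ α)
    {a b : ℝ} (ha : 0 < a) (hab : a ≤ b) (hb : b ≤ r) :
    IntervalIntegrable (fn9 lam) MeasureTheory.volume a b := by
  apply ContinuousOn.intervalIntegrable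
  intro s hs
  rw [Set.uIcc_of_le hab] at hs
  exact (fn9_contAt lam hcont hα hbound
    ⟨lt_of_lt_of_le ha hs.1, le_trans hs.2 hb⟩).continuousWithinAt

private lemma fn9_meas (hcont : ContinuousOn lam (Set.Ioi 0)) {x : ℝ} (hx : 0 < x) :
    StronglyMeasurableAtFilter (fn9 lam) (nhds x) := by
  refine ⟨Set.Ioi 0, Ioi_mem_nhds hx, ?_⟩
  have hlam : AEMeasurable lam (MeasureTheory.volume.restrict (Set.Ioi 0)) :=
    hcont.aemeasurable measurableSet_Ioi
  exact (aemeasurable_const.div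
    ((aemeasurable_id.mul (hlam.add aemeasurable_const)))).aestronglyMeasurable

private lemma H9_deriv (hcont : ContinuousOn lam (Set.Ioi 0))
    (hα : α < -1) (hbound : ∀ ρ, 0 < ρ → ρ ≤ r → lam ρ ≤ α)
    {ρ : ℝ} (hρ : ρ ∈ Set.Ioc 0 r) :
    HasDerivAt (H9 lam r) (-(fn9 lam ρ)) ρ :=
  intervalIntegral.integral_hasDerivAt_left
    (fn9_integrable lam hcont hα hbound hρ.1 hρ.2 le_rfl)
    (fn9_meas lam hcont hρ.1) (fn9_contAt lam hcont hα hbound hρ)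

private lemma H9_mono (hcont : ContinuousOn lam (Set.Ioi 0))
    (hα : α < -1) (hbound : ∀ ρ, 0 < ρ → ρ ≤ r → lam ρ ≤ α) :
    StrictMonoOn (H9 lam r) (Set.Ioc 0 r) := by
  apply strictMonoOn_of_deriv_pos (convex_Ioc 0 r)
  · intro x hx
    exact (H9_deriv lam hcont hα hbound hx).continuousAt.continuousWithinAt
  · intro x hx
    rw [interior_Ioc] at hx
    have hx' : x ∈ Set.Ioc 0 r := ⟨hx.1, hx.2.le⟩
    rw [(H9_deriv lam hcont hα hbound hx').deriv]
    have := fn9_neg lam hα hbound hx'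
    linarith

private lemma H9_diff_bound (hcont : ContinuousOn lam (Set.Ioi 0))
    (hα : α < -1) (hbound : ∀ ρ, 0 < ρ → ρ ≤ r → lam ρ ≤ α)
    {C δ a b : ℝ} {k : ℕ} (hk : 1 ≤ k) (hC : 0 ≤ C) (hδr : δ ≤ r)
    (hfb : ∀ s, 0 < s → s ≤ δ → -(fn9 lam s) ≤ C * s ^ (2*k-1))
    (ha : 0 < a) (hab : a ≤ b) (hb : b ≤ δ) :
    H9 lam r b - H9 lam r a ≤ C * b ^ (2*k) / (2*k) := by
  have hbr : b ≤ r := le_trans hb hδr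
  have int1 : IntervalIntegrable (fn9 lam) MeasureTheory.volume a b :=
    fn9_integrable lam hcont hα hbound ha hab hbr
  have int2 : IntervalIntegrable (fn9 lam) MeasureTheory.volume b r :=
    fn9_integrable lam hcont hα hbound (lt_of_lt_of_le ha hab) hbr le_rfl
  have hsplit : (∫ s in a..b, fn9 lam s) + (∫ s in b..r, fn9 lam s) = ∫ s in a..r, fn9 lam s :=
    intervalIntegral.integral_add_adjacent_intervals int1 int2
  have hdiff : H9 lam r b - H9 lam r a = ∫ s in a..b, -(fn9 lam s) := by
    rw [intervalIntegral.integral_neg]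
    unfold H9
    linarith
  rw [hdiff]
  have hmono : (∫ s in a..b, -(fn9 lam s)) ≤ ∫ s in a..b, C * s ^ (2*k-1) := by
    apply intervalIntegral.integral_mono_on hab int1.neg
    · exact (IntervalIntegrable.const_mul (intervalIntegral.intervalIntegrable_pow _) C)
    · intro x hx
      exact hfb x (lt_of_lt_of_le ha hx.1) (le_trans hx.2 hb)
  refine le_trans hmono ?_
  have hcalc : (∫ s in a..b, C * s ^ (2*k-1)) = C * ((b ^ (2*k) - a ^ (2*k)) / (2*k)) := by
    rw [intervalIntegral.integral_const_mul, integral_pow]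
    have h1 : 2*k-1+1 = 2*k := by omega
    have h2 : ((2*k-1:ℕ):ℝ) + 1 = ((2*k:ℕ):ℝ) := by exact_mod_cast h1
    rw [h1, h2]
    push_cast
    ring
  rw [hcalc]
  have hk' : (0:ℝ) < 2*k := by positivity
  have ha2 : (0:ℝ) ≤ a ^ (2*k) := by positivity
  rw [mul_div_assoc]
  gcongr
  linarith

private lemma stmt9_inv (hα : α < -1)
    {T c T' : ℝ} (hc : 0 < c) (hr : 0 < r) (hT'T : T' ≤ T)
    (hbound : ∀ ρ, 0 < ρ → ρ ≤ r → lam ρ ≤ α)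
    {R : ℝ → ℝ} (hR0 : R 0 = r)
    (hRpos : ∀ t ∈ Set.Ico (0:ℝ) T', 0 < R t)
    (hRode : ∀ t ∈ Set.Ico (0:ℝ) T',
      HasDerivAt R (c / (2*(T - t)) * (lam (R t) + 1) * R t) t) :
    ∀ t ∈ Set.Ico (0:ℝ) T', R t ≤ r := by
  by_contra hcon
  push_neg at hcon
  obtain ⟨t₀, ht₀, hgt⟩ := hcon
  have hRcont : ContinuousOn R (Set.Icc 0 t₀) := fun x hx =>
    ((hRode x ⟨hx.1, lt_of_le_of_lt hx.2 ht₀.2⟩).continuousAt).continuousWithinAt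
  set A := Set.Icc 0 t₀ ∩ R ⁻¹' (Set.Iic r) with hA
  have hA_closed : IsClosed A :=
    hRcont.preimage_isClosed_of_isClosed isClosed_Icc isClosed_Iic
  have hA_ne : A.Nonempty := ⟨0, ⟨le_rfl, ht₀.1⟩, by simp [hR0]⟩
  have hA_bdd : BddAbove A := ⟨t₀, fun x hx => hx.1.2⟩
  set t₁ := sSup A with ht₁
  have ht₁A : t₁ ∈ A := hA_closed.csSup_mem hA_ne hA_bdd
  have ht₁0 : 0 ≤ t₁ := ht₁A.1.1
  have ht₁t₀ : t₁ ≤ t₀ := ht₁A.1.2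
  have hRt₁r : R t₁ ≤ r := ht₁A.2
  have ht₁lt : t₁ < t₀ := lt_of_le_of_ne ht₁t₀
    (by intro h; rw [h] at hRt₁r; exact absurd hRt₁r (not_le.mpr hgt))
  have hafter : ∀ s, t₁ < s → s ≤ t₀ → r < R s := by
    intro s hs1 hs2
    by_contra hle
    push_neg at hle
    exact absurd (le_csSup hA_bdd (⟨⟨le_trans ht₁0 hs1.le, hs2⟩, hle⟩ : s ∈ A)) (not_le.mpr hs1)
  have ht₁mem : t₁ ∈ Set.Ico (0:ℝ) T' := ⟨ht₁0, lt_of_le_of_lt ht₁t₀ ht₀.2⟩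
  have hRt₁ : R t₁ = r := by
    refine le_antisymm hRt₁r ?_
    have htend : Filter.Tendsto R (nhdsWithin t₁ (Set.Ioi t₁)) (nhds (R t₁)) :=
      ((hRode t₁ ht₁mem).continuousAt).continuousWithinAt.tendsto
    refine ge_of_tendsto htend ?_
    filter_upwards [Ioc_mem_nhdsGT_of_mem ⟨le_rfl, ht₁lt⟩] with s hs
    exact (hafter s hs.1 hs.2).le
  have hd : c / (2*(T - t₁)) * (lam (R t₁) + 1) * R t₁ < 0 := by
    have h1 : 0 < T - t₁ := by
      have := ht₁mem.2; linarith
    have h2 : lam (R t₁) + 1 < 0 := by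
      have := hbound r hr le_rfl; rw [hRt₁]; linarith
    have h3 : 0 < R t₁ := hRpos t₁ ht₁mem
    have h4 : 0 < c / (2*(T - t₁)) := by positivity
    have := mul_neg_of_pos_of_neg h4 h2
    exact mul_neg_of_neg_of_pos this h3
  have hslope := (hasDerivAt_iff_tendsto_slope.mp (hRode t₁ ht₁mem))
  have hev : ∀ᶠ s in nhdsWithin t₁ {t₁}ᶜ, slope R t₁ s < 0 := hslope.eventually_lt_const hd
  have hev2 : ∀ᶠ s in nhdsWithin t₁ (Set.Ioi t₁), slope R t₁ s < 0 :=
    hev.filter_mono (nhdsWithin_mono t₁ (fun x hx => ne_of_gt hx))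
  have hev3 : ∀ᶠ s in nhdsWithin t₁ (Set.Ioi t₁), s ∈ Set.Ioc t₁ t₀ :=
    Ioc_mem_nhdsGT_of_mem ⟨le_rfl, ht₁lt⟩
  obtain ⟨s, hs1, hs2⟩ := (hev2.and hev3).exists
  rw [slope_def_field] at hs1
  have hs3 : R s - R t₁ < 0 := by
    rcases div_neg_iff.mp hs1 with ⟨h1, h2⟩ | ⟨h1, h2⟩
    · exact absurd (by linarith [hs2.1] : (0:ℝ) < s - t₁) (not_lt.mpr h2.le)
    · exact h1
  have := hafter s hs2.1 hs2.2
  rw [hRt₁] at hs3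
  linarith

private lemma phi9_deriv {T c t : ℝ} (ht : t < T) :
    HasDerivAt (phi9 T c) (-(c / (2 * (T - t)))) t := by
  have h0 : T - t ≠ 0 := by linarith
  have h1 : HasDerivAt (fun x : ℝ => T - x) (-1) t := (hasDerivAt_id t).const_sub T
  have h2 : HasDerivAt (fun x => Real.log (T - x)) ((T - t)⁻¹ * -1) t :=
    (Real.hasDerivAt_log h0).comp t h1
  have h3 := (h2.sub_const (Real.log T)).const_mul (c / 2)
  refine h3.congr_deriv ?_
  rw [mul_comm 2 (T - t), ← div_div]
  ring

private lemma phi9_zero {T c : ℝ} : phi9 T c 0 = 0 := by simp [phi9]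

private lemma phi9_anti {T c : ℝ} (hc : 0 < c) {t₁ t₂ : ℝ} (h0 : 0 ≤ t₁) (h12 : t₁ < t₂)
    (h2T : t₂ < T) : phi9 T c t₂ < phi9 T c t₁ := by
  have hl : Real.log (T - t₂) < Real.log (T - t₁) :=
    Real.log_lt_log (by linarith) (by linarith)
  have : c / 2 > 0 := by linarith
  unfold phi9
  nlinarith

private lemma phi9_contAt {T c t : ℝ} (ht : t < T) : ContinuousAt (phi9 T c) t :=
  (phi9_deriv ht).continuousAt

private lemma stmt9_id (hα : α < -1)
    {T c T' : ℝ} (hT'T : T' ≤ T)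
    (hbound : ∀ ρ, 0 < ρ → ρ ≤ r → lam ρ ≤ α)
    {R : ℝ → ℝ} (hR0 : R 0 = r)
    (hmem : ∀ t ∈ Set.Ico (0:ℝ) T', R t ∈ Set.Ioc 0 r)
    (hHd : ∀ ρ ∈ Set.Ioc (0:ℝ) r, HasDerivAt (H9 lam r) (-(fn9 lam ρ)) ρ)
    (hφd : ∀ t : ℝ, t < T → HasDerivAt (phi9 T c) (-(c / (2 * (T - t)))) t)
    (hRode : ∀ t ∈ Set.Ico (0:ℝ) T',
      HasDerivAt R (c / (2*(T - t)) * (lam (R t) + 1) * R t) t) :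
    ∀ t ∈ Set.Ico (0:ℝ) T', H9 lam r (R t) = phi9 T c t := by
  intro t ht
  have key : ∀ y ∈ Set.Icc (0:ℝ) t, H9 lam r (R y) = phi9 T c y := by
    apply eq_of_has_deriv_right_eq (f' := fun x => -(c / (2 * (T - x))))
    · intro x hx
      have hx' : x ∈ Set.Ico (0:ℝ) T' := ⟨hx.1, lt_of_lt_of_le hx.2 (le_of_lt ht.2)⟩
      have hmem' := hmem x hx'
      have hder := (hHd (R x) hmem').comp x (hRode x hx')
      have heq : -(fn9 lam (R x)) * (c / (2*(T - x)) * (lam (R x) + 1) * R x)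
          = -(c / (2 * (T - x))) := by
        unfold fn9
        have h1 : R x ≠ 0 := ne_of_gt hmem'.1
        have h2 : lam (R x) + 1 ≠ 0 := by
          have := hbound (R x) hmem'.1 hmem'.2
          intro h
          linarith [h]
        have h3 : T - x ≠ 0 := by
          have : x < T := lt_of_lt_of_le (hx.2.trans ht.2) hT'T
          intro h; linarith [h]
        field_simp
      rw [heq] at hder
      exact hder.hasDerivWithinAt
    · intro x hx
      have hxT : x < T := lt_of_lt_of_le (hx.2.trans ht.2) hT'T
      exact (hφd x hxT).hasDerivWithinAt
    · intro x hx
      have hx' : x ∈ Set.Ico (0:ℝ) T' := ⟨hx.1, lt_of_le_of_lt hx.2 ht.2⟩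
      exact (((hHd (R x) (hmem x hx')).comp x (hRode x hx')).continuousAt).continuousWithinAt
    · intro x hx
      have hxT : x < T := lt_of_le_of_lt hx.2 (lt_of_lt_of_le ht.2 hT'T)
      exact (hφd x hxT).continuousAt.continuousWithinAt
    · rw [hR0, phi9]
      unfold H9
      simp [intervalIntegral.integral_same, phi9]
  exact key t ⟨ht.1, le_rfl⟩

end Aux

set_option maxHeartbeats 1000000

/-- If `λ ≤ α < -1` on `(0,r]` and `1/(ρ(λ(ρ)+1)) = O(ρ^{2k-1})`
as `ρ → 0⁺`, then the maximal solution of `R' = (c/(2(T-t)))(λ(R)+1)R`,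
`R(0) = r`, satisfies `T' < T`, `R(t) → 0` as `t → T'`, and the type I bound
`R(t)^{-2k} ≤ C/(T'-t)` near `T'`. -/
theorem stmt9 (lam : ℝ → ℝ) (hcont : ContinuousOn lam (Set.Ioi 0))
    (k : ℕ) (hk : 1 ≤ k) (α : ℝ) (hα : α < -1)
    (T c r : ℝ) (hT : 0 < T) (hc : 0 < c) (hr : 0 < r)
    (hbound : ∀ ρ, 0 < ρ → ρ ≤ r → lam ρ ≤ α)
    (hO : (fun ρ => 1 / (ρ * (lam ρ + 1)))
      =O[nhdsWithin 0 (Set.Ioi 0)] fun ρ => ρ ^ (2 * k - 1))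
    (T' : ℝ) (hT'0 : 0 < T') (hT'T : T' ≤ T)
    (R : ℝ → ℝ) (hR0 : R 0 = r)
    (hRpos : ∀ t ∈ Set.Ico (0 : ℝ) T', 0 < R t)
    (hRode : ∀ t ∈ Set.Ico (0 : ℝ) T',
      HasDerivAt R (c / (2 * (T - t)) * (lam (R t) + 1) * R t) t)
    (hmax : ∀ (S : ℝ → ℝ) (T₂ : ℝ), T' < T₂ → T₂ ≤ T → S 0 = r →
      (∀ t ∈ Set.Ico (0 : ℝ) T₂, 0 < S t ∧
        HasDerivAt S (c / (2 * (T - t)) * (lam (S t) + 1) * S t) t) → False) :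
    T' < T
    ∧ Tendsto R (nhdsWithin T' (Set.Iio T')) (nhds 0)
    ∧ ∃ C > (0 : ℝ), ∃ t₀ ∈ Set.Ico (0 : ℝ) T',
        ∀ t ∈ Set.Ico t₀ T', (R t)⁻¹ ^ (2 * k) ≤ C / (T' - t) := by
  have hIoc : ∀ t ∈ Set.Ico (0:ℝ) T', R t ∈ Set.Ioc 0 r := fun t ht =>
    ⟨hRpos t ht, stmt9_inv lam hα hc hr hT'T hbound hR0 hRpos hRode t ht⟩
  have hHd : ∀ ρ ∈ Set.Ioc (0:ℝ) r, HasDerivAt (H9 lam r) (-(fn9 lam ρ)) ρ :=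
    fun ρ hρ => H9_deriv lam hcont hα hbound hρ
  have hφd : ∀ t : ℝ, t < T → HasDerivAt (phi9 T c) (-(c / (2 * (T - t)))) t :=
    fun t ht => phi9_deriv ht
  have hId : ∀ t ∈ Set.Ico (0:ℝ) T', H9 lam r (R t) = phi9 T c t :=
    stmt9_id lam hα hT'T hbound hR0 hIoc hHd hφd hRode
  have hHmono := H9_mono lam hcont hα hbound
  have hRanti : ∀ t₁ ∈ Set.Ico (0:ℝ) T', ∀ t₂ ∈ Set.Ico (0:ℝ) T', t₁ < t₂ → R t₂ < R t₁ := by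
    intro t₁ h1 t₂ h2 h12
    have hφ := phi9_anti hc h1.1 h12 (lt_of_lt_of_le h2.2 hT'T)
    rw [← hId t₁ h1, ← hId t₂ h2] at hφ
    exact (hHmono.lt_iff_lt (hIoc t₂ h2) (hIoc t₁ h1)).mp hφ
  -- extract the big-O constants
  obtain ⟨C, hCpos, hCbound⟩ := hO.exists_pos
  rw [Asymptotics.isBigOWith_iff] at hCbound
  obtain ⟨u, hu, huss⟩ := mem_nhdsGT_iff_exists_Ioo_subset.mp hCbound
  set δ := min (u/2) r with hδdef
  have hδpos : 0 < δ := lt_min (by simpa using half_pos (show (0:ℝ) < u from hu)) hr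
  have hδr : δ ≤ r := min_le_right _ _
  have hfb : ∀ s, 0 < s → s ≤ δ → -(fn9 lam s) ≤ C * s ^ (2*k-1) := by
    intro s hs hsd
    have hsu : s ∈ Set.Ioo (0:ℝ) u := ⟨hs, by
      have h1 := min_le_left (u/2) r
      have : s ≤ u/2 := le_trans hsd h1
      linarith [hu.out]⟩
    have hb2 := huss hsu
    simp only [Set.mem_setOf_eq, Real.norm_eq_abs] at hb2
    have h1 : |s ^ (2*k-1)| = s^(2*k-1) := abs_of_pos (pow_pos hs _)
    rw [h1] at hb2
    calc -(fn9 lam s) ≤ |fn9 lam s| := neg_le_abs _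
    _ ≤ C * s^(2*k-1) := hb2
  have hHdiff : ∀ a b : ℝ, 0 < a → a ≤ b → b ≤ δ →
      H9 lam r b - H9 lam r a ≤ C * b^(2*k)/(2*k) :=
    fun a b ha hab hb => H9_diff_bound lam hcont hα hbound hk hCpos.le hδr hfb ha hab hb
  have hδmem : δ ∈ Set.Ioc (0:ℝ) r := ⟨hδpos, hδr⟩
  have hHlb : ∀ ρ ∈ Set.Ioc (0:ℝ) r, H9 lam r δ - C*δ^(2*k)/(2*k) ≤ H9 lam r ρ := by
    intro ρ hρ
    rcases le_or_gt ρ δ with h | h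
    · have := hHdiff ρ δ hρ.1 h le_rfl
      linarith
    · have h1 : H9 lam r δ ≤ H9 lam r ρ := (hHmono hδmem hρ h).le
      have h2 : 0 ≤ C*δ^(2*k)/(2*k) := by positivity
      linarith
  -- Part 1 : T' < T
  have hT'ltT : T' < T := by
    rcases lt_or_eq_of_le hT'T with h | h
    · exact h
    · exfalso
      have h1 : Tendsto (fun t => T - t) (nhdsWithin T (Set.Iio T)) (nhdsWithin 0 (Set.Ioi 0)) := by
        rw [tendsto_nhdsWithin_iff]
        constructor
        · have : Tendsto (fun t : ℝ => T - t) (nhds T) (nhds (T - T)) :=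
            (tendsto_const_nhds.sub tendsto_id)
          rw [sub_self] at this
          exact this.mono_left nhdsWithin_le_nhds
        · filter_upwards [self_mem_nhdsWithin] with t ht
          simpa using ht.out
      have h2 : Tendsto (fun t => Real.log (T - t)) (nhdsWithin T (Set.Iio T)) atBot :=
        Real.tendsto_log_nhdsGT_zero.comp h1
      have h3 : Tendsto (phi9 T c) (nhdsWithin T (Set.Iio T)) atBot := by
        have h4 : Tendsto (fun t => Real.log (T - t) - Real.log T)
            (nhdsWithin T (Set.Iio T)) atBot := tendsto_atBot_add_const_right _ _ h2
        have h5 := h4.const_mul_atBot (show (0:ℝ) < c/2 by linarith)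
        exact h5
      have hev1 := h3.eventually_lt_atBot (H9 lam r δ - C*δ^(2*k)/(2*k))
      have hev2 : Set.Ioo (0:ℝ) T' ∈ nhdsWithin T (Set.Iio T) := by
        rw [← h]
        exact Ioo_mem_nhdsLT_of_mem ⟨hT'0, le_rfl⟩
      obtain ⟨t, hlt, htmem⟩ := (hev1.and hev2).exists
      have htm : t ∈ Set.Ico (0:ℝ) T' := ⟨htmem.1.le, htmem.2⟩
      have := hHlb (R t) (hIoc t htm)
      rw [hId t htm] at this
      linarith
  -- the limit L
  have hRantiOn : AntitoneOn R (Set.Ioo 0 T') := by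
    intro a ha b hb hab
    rcases eq_or_lt_of_le hab with h | h
    · rw [h]
    · exact (hRanti a ⟨ha.1.le, ha.2⟩ b ⟨hb.1.le, hb.2⟩ h).le
  have hne : (Set.Ioo (0:ℝ) T').Nonempty := ⟨T'/2, by constructor <;> linarith⟩
  have hbdd : BddBelow (R '' Set.Ioo 0 T') := by
    refine ⟨0, ?_⟩
    rintro y ⟨t, ht, rfl⟩
    exact (hRpos t ⟨ht.1.le, ht.2⟩).le
  set L := sInf (R '' Set.Ioo 0 T') with hLdef
  have hRtend : Tendsto R (nhdsWithin T' (Set.Iio T')) (nhds L) :=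
    hRantiOn.tendsto_nhdsWithin_Ioo_left hne hbdd
  have hL0 : 0 ≤ L := by
    apply le_csInf (hne.image R)
    rintro y ⟨t, ht, rfl⟩
    exact (hRpos t ⟨ht.1.le, ht.2⟩).le
  have hLlt : ∀ t ∈ Set.Ico (0:ℝ) T', L < R t := by
    intro t ht
    have hmid : (t + T')/2 ∈ Set.Ioo (0:ℝ) T' := by
      constructor
      · have := ht.1; linarith
      · have := ht.2; linarith
    have h1 : R ((t+T')/2) < R t :=
      hRanti t ht _ ⟨hmid.1.le, hmid.2⟩ (by have := ht.2; linarith)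
    exact lt_of_le_of_lt (csInf_le hbdd ⟨_, hmid, rfl⟩) h1
  -- Part 2 : L = 0
  have hLzero : L = 0 := by
    by_contra hne0
    have hLpos : 0 < L := lt_of_le_of_ne hL0 (Ne.symm hne0)
    have hLr : L < r := by
      have h1 := hLlt (T'/2) ⟨by linarith, by linarith⟩
      have h2 := (hIoc (T'/2) ⟨by linarith, by linarith⟩).2
      linarith
    set D := Set.Ioo (L/2) r with hDdef
    have hDsub : D ⊆ Set.Ioc 0 r := fun x hx => ⟨lt_trans (by linarith) hx.1, hx.2.le⟩
    have hLmem : L ∈ Set.Ioc 0 r := ⟨hLpos, hLr.le⟩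
    have hL2mem : (L/2) ∈ Set.Ioc 0 r := ⟨by linarith, by linarith⟩
    -- H L = φ T'
    have hHL : Tendsto (fun t => H9 lam r (R t)) (nhdsWithin T' (Set.Iio T'))
        (nhds (H9 lam r L)) := ((hHd L hLmem).continuousAt.tendsto).comp hRtend
    have hHLφ : H9 lam r L = phi9 T c T' := by
      refine tendsto_nhds_unique hHL ?_
      apply Tendsto.congr' ?_ ((phi9_contAt hT'ltT).continuousWithinAt.tendsto)
      filter_upwards [Ioo_mem_nhdsLT_of_mem (⟨hT'0, le_rfl⟩ : T' ∈ Set.Ioc 0 T')] with s hs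
      exact (hId s ⟨hs.1.le, hs.2⟩).symm
    have hH2 : H9 lam r (L/2) < H9 lam r L := hHmono hL2mem hLmem (by linarith)
    -- choose T₂
    have hevT : ∀ᶠ s in nhdsWithin T' (Set.Ioi T'), (H9 lam r (L/2) < phi9 T c s ∧ s < T) := by
      apply Filter.Eventually.filter_mono nhdsWithin_le_nhds
      have e1 : ∀ᶠ s in nhds T', H9 lam r (L/2) < phi9 T c s :=
        ((phi9_contAt hT'ltT).tendsto).eventually_const_lt (hHLφ ▸ hH2)
      have e2 : ∀ᶠ s in nhds T', s < T := tendsto_id.eventually_lt_const hT'ltT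
      exact e1.and e2
    obtain ⟨T₂, ⟨hφT₂, hT₂T⟩, hT₂gt⟩ := (hevT.and self_mem_nhdsWithin).exists
    replace hT₂gt : T' < T₂ := hT₂gt
    -- the inverse function
    set U := Set.Ioo (H9 lam r (L/2)) 0 with hUdef
    have hUopen : IsOpen U := isOpen_Ioo
    have hUimg : U ⊆ H9 lam r '' D := by
      have hcontH : ContinuousOn (H9 lam r) (Set.Icc (L/2) r) := fun x hx =>
        (hHd x ⟨lt_of_lt_of_le hL2mem.1 hx.1, hx.2⟩).continuousAt.continuousWithinAt
      have him := intermediate_value_Ioo (by linarith : L/2 ≤ r) hcontH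
      have hHr : H9 lam r r = 0 := intervalIntegral.integral_same
      rw [hHr] at him
      exact him
    have hInj : Set.InjOn (H9 lam r) D := (hHmono.mono hDsub).injOn
    set g := Function.invFunOn (H9 lam r) D with hgdef
    have hg1 : ∀ y ∈ U, g y ∈ D := by
      intro y hy
      obtain ⟨x, hx, he⟩ := hUimg hy
      exact Function.invFunOn_mem ⟨x, hx, he⟩
    have hg2 : ∀ y ∈ U, H9 lam r (g y) = y := by
      intro y hy
      obtain ⟨x, hx, he⟩ := hUimg hy
      exact Function.invFunOn_eq ⟨x, hx, he⟩
    have hg3 : ∀ x ∈ D, g (H9 lam r x) = x := fun x hx => hInj.leftInvOn_invFunOn hx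
    -- continuity of g on U
    have hgc : ∀ a ∈ U, ContinuousAt g a := by
      intro a ha
      have hgaD : g a ∈ D := hg1 a ha
      have hHga : H9 lam r (g a) = a := hg2 a ha
      have : Filter.Tendsto g (nhds a) (nhds (g a)) := by
        refine tendsto_order.2 ⟨?_, ?_⟩
        · intro b hb
          rcases le_or_gt b (L/2) with hbL | hbL
          · filter_upwards [hUopen.mem_nhds ha] with y hy
            exact lt_of_le_of_lt hbL (hg1 y hy).1
          · have hx'1 : b < (b + g a)/2 := by linarith
            have hx'2 : (b + g a)/2 < g a := by linarith
            have hx'mem : (b + g a)/2 ∈ Set.Ioc 0 r :=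
              ⟨by linarith [hL2mem.1], by linarith [hgaD.2]⟩
            have hHx' : H9 lam r ((b + g a)/2) < a :=
              lt_of_lt_of_eq (hHmono hx'mem (hDsub hgaD) hx'2) hHga
            filter_upwards [hUopen.mem_nhds ha, Ioi_mem_nhds hHx'] with y hy hy2
            have hyD := hg1 y hy
            have h3 : H9 lam r ((b + g a)/2) < H9 lam r (g y) := by
              rw [hg2 y hy]; exact hy2
            have h4 : (b + g a)/2 < g y := (hHmono.lt_iff_lt hx'mem (hDsub hyD)).mp h3
            linarith
        · intro b hb
          rcases le_or_gt r b with hbr | hbr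
          · filter_upwards [hUopen.mem_nhds ha] with y hy
            exact lt_of_lt_of_le (hg1 y hy).2 hbr
          · have hx'1 : g a < (g a + b)/2 := by linarith
            have hx'2 : (g a + b)/2 < b := by linarith
            have hx'mem : (g a + b)/2 ∈ Set.Ioc 0 r :=
              ⟨by linarith [hgaD.1, hL2mem.1], by linarith [hgaD.2]⟩
            have hHx' : a < H9 lam r ((g a + b)/2) :=
              lt_of_eq_of_lt hHga.symm (hHmono (hDsub hgaD) hx'mem hx'1)
            filter_upwards [hUopen.mem_nhds ha, Iio_mem_nhds hHx'] with y hy hy2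
            have hyD := hg1 y hy
            have h3 : H9 lam r (g y) < H9 lam r ((g a + b)/2) := by
              rw [hg2 y hy]; exact hy2
            have h4 : g y < (g a + b)/2 := (hHmono.lt_iff_lt (hDsub hyD) hx'mem).mp h3
            linarith
      exact this
    -- φ maps (0, T₂) into U
    have hφmem : ∀ t : ℝ, 0 < t → t < T₂ → phi9 T c t ∈ U := by
      intro t h0 h2
      constructor
      · exact lt_trans hφT₂ (phi9_anti hc h0.le h2 hT₂T)
      · have := phi9_anti hc le_rfl h0 (lt_trans h2 hT₂T)
        rwa [phi9_zero] at this
    have hgφR : ∀ t ∈ Set.Ioo (0:ℝ) T', g (phi9 T c t) = R t := by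
      intro t ht
      have hRtD : R t ∈ D := by
        constructor
        · have := hLlt t ⟨ht.1.le, ht.2⟩; linarith
        · have := hRanti 0 ⟨le_rfl, hT'0⟩ t ⟨ht.1.le, ht.2⟩ ht.1
          rwa [hR0] at this
      rw [← hId t ⟨ht.1.le, ht.2⟩]
      exact hg3 (R t) hRtD
    -- the extension
    set S := fun t => if t < T'/2 then R t else g (phi9 T c t) with hSdef
    have hSR : ∀ t, t < T'/2 → S t = R t := fun t ht => if_pos ht
    have hSg : ∀ t, 0 < t → S t = g (phi9 T c t) := by
      intro t h0
      simp only [hSdef]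
      by_cases hcase : t < T'/2
      · rw [if_pos hcase]
        exact (hgφR t ⟨h0, by linarith⟩).symm
      · rw [if_neg hcase]
    have hS0 : S 0 = r := by
      rw [hSR 0 (by linarith)]
      exact hR0
    refine hmax S T₂ hT₂gt hT₂T.le hS0 ?_
    intro t ht
    by_cases hcase : t < T'/2
    · have htm : t ∈ Set.Ico (0:ℝ) T' := ⟨ht.1, by linarith⟩
      have hEq : S =ᶠ[nhds t] R := by
        filter_upwards [Iio_mem_nhds hcase] with s hs
        exact hSR s hs
      constructor
      · rw [hSR t hcase]
        exact hRpos t htm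
      · rw [hSR t hcase]
        exact (hEq.hasDerivAt_iff).mpr (hRode t htm)
    · push_neg at hcase
      have h0t : 0 < t := lt_of_lt_of_le (by linarith) hcase
      have haU : phi9 T c t ∈ U := hφmem t h0t ht.2
      have hxD : g (phi9 T c t) ∈ D := hg1 _ haU
      have hxIoc : g (phi9 T c t) ∈ Set.Ioc 0 r := hDsub hxD
      have hfneg : fn9 lam (g (phi9 T c t)) < 0 := fn9_neg lam hα hbound hxIoc
      have hgd : HasDerivAt g (-(fn9 lam (g (phi9 T c t))))⁻¹ (phi9 T c t) := by
        apply HasDerivAt.of_local_left_inverse (hgc _ haU) (hHd _ hxIoc)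
        · exact ne_of_gt (by linarith)
        · filter_upwards [hUopen.mem_nhds haU] with y hy
          exact hg2 y hy
      have hφd' := hφd t (lt_trans ht.2 hT₂T)
      have hcomp := hgd.comp t hφd'
      have hEq : S =ᶠ[nhds t] fun s => g (phi9 T c s) := by
        filter_upwards [Ioi_mem_nhds h0t] with s hs
        exact hSg s hs
      have hval : S t = g (phi9 T c t) := hSg t h0t
      constructor
      · rw [hval]
        exact lt_trans (by linarith) hxD.1
      · rw [hval]
        have hder : HasDerivAt S ((-(fn9 lam (g (phi9 T c t))))⁻¹ * -(c / (2 * (T - t)))) t :=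
          (hEq.hasDerivAt_iff).mpr hcomp
        convert hder using 1
        unfold fn9
        have h1 : g (phi9 T c t) ≠ 0 := ne_of_gt hxIoc.1
        have h2 : lam (g (phi9 T c t)) + 1 ≠ 0 :=
          ne_of_lt (lam9_neg lam hα hbound hxIoc)
        have h3 : T - t ≠ 0 := by
          have : t < T := lt_trans ht.2 hT₂T
          intro hh; linarith [hh]
        field_simp
  refine ⟨hT'ltT, by rwa [hLzero] at hRtend, ?_⟩
  -- Part 3 : type I bound
  have hRtend0 : Tendsto R (nhdsWithin T' (Set.Iio T')) (nhds 0) := by rwa [hLzero] at hRtend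
  have hδev : ∀ᶠ t in nhdsWithin T' (Set.Iio T'), R t < δ := hRtend0.eventually_lt_const hδpos
  have hmemev : Set.Ioo (0:ℝ) T' ∈ nhdsWithin T' (Set.Iio T') :=
    Ioo_mem_nhdsLT_of_mem ⟨hT'0, le_rfl⟩
  obtain ⟨t₀, hde, ht₀⟩ := (hδev.and hmemev).exists
  obtain ⟨hde, ht₀⟩ := And.intro hde ht₀
  have hkR : (0:ℝ) < k := by exact_mod_cast hk
  refine ⟨T*C/(k*c), by positivity, t₀, ⟨ht₀.1.le, ht₀.2⟩, ?_⟩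
  intro t ht
  have htmem : t ∈ Set.Ico (0:ℝ) T' := ⟨le_trans ht₀.1.le ht.1, ht.2⟩
  have hRtδ : R t ≤ δ := by
    rcases eq_or_lt_of_le ht.1 with h | h
    · rw [← h]; exact hde.le
    · exact le_trans (hRanti t₀ ⟨ht₀.1.le, ht₀.2⟩ t htmem h).le hde.le
  have hRtpos : 0 < R t := hRpos t htmem
  -- claim A
  have hA : phi9 T c t - phi9 T c T' ≤ C * (R t)^(2*k) / (2*k) := by
    have hev : ∀ᶠ t₂ in nhdsWithin T' (Set.Iio T'),
        phi9 T c t - phi9 T c t₂ ≤ C * (R t)^(2*k)/(2*k) := by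
      filter_upwards [Ioo_mem_nhdsLT_of_mem (⟨ht.2, le_rfl⟩ : T' ∈ Set.Ioc t T')] with t₂ ht₂
      have ht₂mem : t₂ ∈ Set.Ico (0:ℝ) T' := ⟨le_trans htmem.1 ht₂.1.le, ht₂.2⟩
      rw [← hId t htmem, ← hId t₂ ht₂mem]
      exact hHdiff (R t₂) (R t) (hRpos t₂ ht₂mem)
        (hRanti t htmem t₂ ht₂mem ht₂.1).le hRtδ
    have htd : Tendsto (fun t₂ => phi9 T c t - phi9 T c t₂) (nhdsWithin T' (Set.Iio T'))
        (nhds (phi9 T c t - phi9 T c T')) :=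
      tendsto_const_nhds.sub ((phi9_contAt hT'ltT).continuousWithinAt.tendsto)
    exact le_of_tendsto htd hev
  -- claim B
  have hB : c/2 * ((T' - t)/T) ≤ phi9 T c t - phi9 T c T' := by
    have hTt : 0 < T - t := by have := htmem.2; linarith
    have hTT' : 0 < T - T' := by linarith
    have hfrac : 0 < (T - T')/(T - t) := by positivity
    have h1 : Real.log ((T - T')/(T - t)) ≤ (T - T')/(T - t) - 1 :=
      Real.log_le_sub_one_of_pos hfrac
    rw [Real.log_div (ne_of_gt hTT') (ne_of_gt hTt)] at h1
    have h2 : phi9 T c t - phi9 T c T' = c/2 * (Real.log (T - t) - Real.log (T - T')) := by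
      unfold phi9; ring
    rw [h2]
    have h3 : (T' - t)/T ≤ 1 - (T - T')/(T - t) := by
      rw [sub_div' (ne_of_gt hTt)]
      rw [div_le_div_iff₀ hT hTt]
      have h4 : T - t ≤ T := by have := htmem.1; linarith
      nlinarith [ht.2]
    have h5 : 1 - (T - T')/(T - t) ≤ Real.log (T - t) - Real.log (T - T') := by linarith
    have h6 : (0:ℝ) < c/2 := by linarith
    nlinarith
  -- combine
  have hcomb : c*k*(T' - t)/(T*C) ≤ (R t)^(2*k) := by
    have h1 : c/2 * ((T' - t)/T) ≤ C * (R t)^(2*k) / (2*k) := le_trans hB hA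
    have e1 : c/2 * ((T' - t)/T) = (c*(T' - t))/(2*T) := by ring
    rw [e1, div_le_div_iff₀ (by positivity) (by positivity)] at h1
    rw [div_le_iff₀ (by positivity)]
    ring_nf at h1 ⊢
    linarith
  rw [inv_pow]
  have hQpos : 0 < c*k*(T' - t)/(T*C) := by
    have := ht.2; have hT't : 0 < T' - t := by linarith
    positivity
  have hinv := inv_anti₀ hQpos hcomb
  refine le_trans hinv (le_of_eq ?_)
  rw [inv_div, show c*(k:ℝ)*(T' - t) = (k*c)*(T' - t) by ring, ← div_div]
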